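/- Let $n > k$ be integers and let $g \in L_2(\mathbb{R}^d)$ satisfy $\int_Q g = 0$ for every dyadic cube $Q$ of side length $2^{-(n-1)}$. Define the averaging operator $M_k g(x) = \frac{1}{|B_k|}\int_{B_k} g(x+y)\,dy$ with $B_k = B(0,2^{-k})$. Then $\|M_k g\|_2^2 \le C_d \, 2^{k-n} \|g\|_2^2$. -/

import Mathlib

open MeasureTheory Metric
open scoped ENNReal

noncomputable section

/-- Euclidean space `ℝ^d`. -/
abbrev Euc (d : ℕ) := EuclideanSpace ℝ (Fin d)

/-- The standard dyadic cube at scale `n` (side length `2^{-n}`) indexed by `m`. -/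
def dyadicCube (d : ℕ) (n : ℤ) (m : Fin d → ℤ) : Set (Euc d) :=
  {y | ∀ j, (m j : ℝ) * 2 ^ (-n) ≤ y j ∧ y j < ((m j : ℝ) + 1) * 2 ^ (-n)}

/-- Index of the dyadic cube at scale `n` containing `x`. -/
def dyadicIdx (d : ℕ) (n : ℤ) (x : Euc d) : Fin d → ℤ :=
  fun j => ⌊(2 : ℝ) ^ n * x j⌋

/-- Dyadic conditional expectation at scale `2^{-n}`. -/
def Ek (d : ℕ) (n : ℤ) (h : Euc d → ℝ) (x : Euc d) : ℝ :=
  (2 : ℝ) ^ (n * d) * ∫ y in dyadicCube d n (dyadicIdx d n x), h y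

/-- Average over the Euclidean ball of radius `2^{-k}` centered at `x`. -/
def Mk (d : ℕ) (k : ℤ) (h : Euc d → ℝ) (x : Euc d) : ℝ :=
  ((volume (ball (0 : Euc d) ((2 : ℝ) ^ (-k)))).toReal)⁻¹ *
    ∫ y in ball x ((2 : ℝ) ^ (-k)), h y

/-- Indices of dyadic cubes at scale `n` meeting the boundary of the ball `B(x, 2^{-k})`. -/
def bdryIdx (d : ℕ) (k n : ℤ) (x : Euc d) : Set (Fin d → ℤ) :=
  {m | (dyadicCube d n m ∩ frontier (ball x ((2 : ℝ) ^ (-k)))).Nonempty}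

/-- `𝓘(B_k + x, n)`: union over boundary cubes `Q` at scale `n` of `Q ∩ B(x,2^{-k})`. -/
def Ikn (d : ℕ) (k n : ℤ) (x : Euc d) : Set (Euc d) :=
  ⋃ m ∈ bdryIdx d k n x, dyadicCube d n m ∩ ball x ((2 : ℝ) ^ (-k))

/-- The operator `M_{k,n}`. -/
def Mkn (d : ℕ) (k n : ℤ) (h : Euc d → ℝ) (x : Euc d) : ℝ :=
  ((volume (ball (0 : Euc d) ((2 : ℝ) ^ (-k)))).toReal)⁻¹ * ∫ y in Ikn d k n x, h y

/-- The concentric dilation `iQ` of the dyadic cube at scale `n` indexed by `m`. -/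
def cubeDil (d : ℕ) (i : ℕ) (n : ℤ) (m : Fin d → ℤ) : Set (Euc d) :=
  {y | ∀ j, ((m j : ℝ) + 1 / 2) * 2 ^ (-n) - (i : ℝ) * 2 ^ (-n) / 2 ≤ y j ∧
      y j < ((m j : ℝ) + 1 / 2) * 2 ^ (-n) + (i : ℝ) * 2 ^ (-n) / 2}

lemma mem_cube_iff (d : ℕ) (n : ℤ) (m : Fin d → ℤ) (y : Euc d) :
    y ∈ dyadicCube d n m ↔ dyadicIdx d n y = m := by
  have h2 : (0:ℝ) < 2 ^ n := zpow_pos two_pos n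
  constructor
  · intro h; funext j
    obtain ⟨h1, h2'⟩ := h j
    rw [zpow_neg, ← div_eq_mul_inv, div_le_iff₀ h2] at h1
    rw [zpow_neg, ← div_eq_mul_inv, lt_div_iff₀ h2] at h2'
    exact Int.floor_eq_iff.2 ⟨by linarith [h1], by push_cast; linarith [h2']⟩
  · intro h j
    have := congrFun h j
    rw [dyadicIdx] at this
    have h1 := Int.floor_le ((2:ℝ) ^ n * y j)
    have h2' := Int.lt_floor_add_one ((2:ℝ) ^ n * y j)
    rw [this] at h1 h2'
    constructor
    · rw [zpow_neg, ← div_eq_mul_inv, div_le_iff₀ h2]; linarith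
    · rw [zpow_neg, ← div_eq_mul_inv, lt_div_iff₀ h2]; push_cast at h2' ⊢; linarith

lemma cube_measurable (d : ℕ) (n : ℤ) (m : Fin d → ℤ) : MeasurableSet (dyadicCube d n m) := by
  have : dyadicCube d n m = ⋂ j, (fun y : Euc d => y j) ⁻¹' (Set.Ico ((m j : ℝ) * 2 ^ (-n)) (((m j : ℝ) + 1) * 2 ^ (-n))) := by
    ext y; simp [dyadicCube, Set.mem_iInter]
  rw [this]
  exact MeasurableSet.iInter fun j => (by fun_prop : Measurable fun y : Euc d => y j) measurableSet_Ico

lemma cube_dist (d : ℕ) (n : ℤ) (m : Fin d → ℤ) {y z : Euc d}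
    (hy : y ∈ dyadicCube d n m) (hz : z ∈ dyadicCube d n m) :
    dist y z ≤ Real.sqrt d * 2 ^ (-n) := by
  rw [EuclideanSpace.dist_eq]
  have key : ∑ j, dist (y j) (z j) ^ 2 ≤ (d : ℝ) * ((2:ℝ) ^ (-n)) ^ 2 := by
    calc ∑ j, dist (y j) (z j) ^ 2 ≤ ∑ _j : Fin d, ((2:ℝ) ^ (-n)) ^ 2 := by
          apply Finset.sum_le_sum; intro j _
          have hyj := hy j; have hzj := hz j
          have e : ((m j:ℝ)+1) * 2^(-n) = (m j:ℝ)*2^(-n) + 2^(-n) := by ring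
          have habs : |y j - z j| ≤ (2:ℝ)^(-n) :=
            abs_sub_le_iff.2 ⟨by linarith [hyj.1, hyj.2, hzj.1, hzj.2],
              by linarith [hyj.1, hyj.2, hzj.1, hzj.2]⟩
          rw [Real.dist_eq]
          exact pow_le_pow_left₀ (abs_nonneg _) habs 2
      _ = (d : ℝ) * ((2:ℝ) ^ (-n)) ^ 2 := by simp [Finset.sum_const, mul_comm]
  calc Real.sqrt (∑ j, dist (y j) (z j) ^ 2) ≤ Real.sqrt ((d : ℝ) * ((2:ℝ) ^ (-n)) ^ 2) := Real.sqrt_le_sqrt key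
    _ = Real.sqrt d * 2 ^ (-n) := by
        rw [Real.sqrt_mul (Nat.cast_nonneg d), Real.sqrt_sq (by positivity)]

lemma cube_cover (d : ℕ) (ν : ℤ) (S : Set (Euc d)) :
    ⋃ m, (dyadicCube d ν m ∩ S) = S := by
  ext y
  simp only [Set.mem_iUnion, Set.mem_inter_iff]
  exact ⟨fun ⟨m, _, h⟩ => h, fun h => ⟨dyadicIdx d ν y, (mem_cube_iff d ν _ y).2 rfl, h⟩⟩

lemma cube_disjoint (d : ℕ) (ν : ℤ) {S : Set (Euc d)} :
    Pairwise (Function.onFun Disjoint (fun m => dyadicCube d ν m ∩ S)) := by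
  intro m m' hmm'
  refine Set.disjoint_left.2 fun y hy hy' => hmm' ?_
  rw [← (mem_cube_iff d ν m y).1 hy.1, (mem_cube_iff d ν m' y).1 hy'.1]

lemma step1 (d : ℕ) (ν : ℤ) {r δ : ℝ} (hδd : Real.sqrt d * 2^(-ν) ≤ δ)
    (g : Euc d → ℝ) (x : Euc d)
    (hg : IntegrableOn g (ball x r) volume)
    (hc : ∀ m, ∫ y in dyadicCube d ν m, g y = 0) :
    |∫ y in ball x r, g y| ≤ ∫ y in ball x r \ ball x (r - δ), |g y| := by
  set A := ball x r \ ball x (r - δ) with hA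
  have hAsub : A ⊆ ball x r := Set.diff_subset
  have hgA : IntegrableOn (fun y => |g y|) A volume := (hg.mono_set hAsub).abs
  have hmeasA : MeasurableSet A := measurableSet_ball.diff measurableSet_ball
  have h1 : HasSum (fun m => ∫ y in dyadicCube d ν m ∩ ball x r, g y)
      (∫ y in ball x r, g y) := by
    have := hasSum_integral_iUnion (μ := volume) (f := g)
      (s := fun m => dyadicCube d ν m ∩ ball x r)
      (fun m => (cube_measurable d ν m).inter measurableSet_ball)
      (cube_disjoint d ν) (by rw [cube_cover]; exact hg)
    rwa [cube_cover] at this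
  have h2 : HasSum (fun m => ∫ y in dyadicCube d ν m ∩ A, |g y|)
      (∫ y in A, |g y|) := by
    have := hasSum_integral_iUnion (μ := volume) (f := fun y => |g y|)
      (s := fun m => dyadicCube d ν m ∩ A)
      (fun m => (cube_measurable d ν m).inter hmeasA)
      (cube_disjoint d ν) (by rw [cube_cover]; exact hgA)
    rwa [cube_cover] at this
  have hm : ∀ m, |∫ y in dyadicCube d ν m ∩ ball x r, g y| ≤
      ∫ y in dyadicCube d ν m ∩ A, |g y| := by
    intro m
    by_cases hsub : dyadicCube d ν m ⊆ ball x r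
    · rw [Set.inter_eq_left.2 hsub, hc m, abs_zero]
      exact setIntegral_nonneg ((cube_measurable d ν m).inter hmeasA)
        fun y _ => abs_nonneg _
    · rw [Set.not_subset] at hsub
      obtain ⟨z, hzQ, hzB⟩ := hsub
      have hsubA : dyadicCube d ν m ∩ ball x r ⊆ dyadicCube d ν m ∩ A := by
        rintro y ⟨hyQ, hyB⟩
        refine ⟨hyQ, hyB, fun hyB' => hzB ?_⟩
        rw [mem_ball] at hyB' ⊢
        have hdyz : dist y z ≤ δ := (cube_dist d ν m hyQ hzQ).trans hδd
        have h3 : dist z x ≤ dist z y + dist y x := dist_triangle z y x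
        have h4 : dist z y = dist y z := dist_comm z y
        linarith
      calc |∫ y in dyadicCube d ν m ∩ ball x r, g y|
          ≤ ∫ y in dyadicCube d ν m ∩ ball x r, |g y| := by
            simpa [Real.norm_eq_abs] using
              norm_integral_le_integral_norm (μ := volume.restrict (dyadicCube d ν m ∩ ball x r)) g
        _ ≤ ∫ y in dyadicCube d ν m ∩ A, |g y| :=
            setIntegral_mono_set (hgA.mono_set Set.inter_subset_right)
              (Filter.Eventually.of_forall fun y => abs_nonneg _)
              (HasSubset.Subset.eventuallyLE hsubA)
  exact abs_le.2 ⟨hasSum_le (fun m => (abs_le.1 (hm m)).1) h2.neg h1,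
    hasSum_le (fun m => (abs_le.1 (hm m)).2) h1 h2⟩

lemma pow_sub_pow_le_aux {a b : ℝ} (hb : 0 ≤ b) (hab : b ≤ a) :
    ∀ d : ℕ, a ^ d - b ^ d ≤ d * a ^ (d - 1) * (a - b)
  | 0 => by simp
  | (d+1) => by
    have ha : 0 ≤ a := hb.trans hab
    have ih := pow_sub_pow_le_aux hb hab d
    have hbd : b ^ d ≤ a ^ d := pow_le_pow_left₀ hb hab d
    have key : a ^ (d+1) - b ^ (d+1) = a * (a^d - b^d) + b^d * (a - b) := by ring
    have h1 : a * (a^d - b^d) ≤ a * ((d:ℝ) * a^(d-1) * (a-b)) :=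
      mul_le_mul_of_nonneg_left ih ha
    have h2 : a * ((d:ℝ) * a^(d-1) * (a-b)) ≤ (d:ℝ) * a^d * (a-b) := by
      rcases Nat.eq_zero_or_pos d with rfl | hd
      · simp
      · have hpa : a * a^(d-1) = a^d := by
          rw [← pow_succ']; congr 1; omega
        rw [show a * ((d:ℝ) * a^(d-1)*(a-b)) = (d:ℝ) * (a * a^(d-1)) * (a-b) from by ring, hpa]
    have h3 : b^d * (a-b) ≤ a^d * (a-b) := mul_le_mul_of_nonneg_right hbd (by linarith)
    calc a^(d+1) - b^(d+1) = a * (a^d-b^d) + b^d*(a-b) := key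
      _ ≤ (d:ℝ) * a^d * (a-b) + a^d * (a-b) := add_le_add (h1.trans h2) h3
      _ = ((d+1 : ℕ) : ℝ) * a^((d+1)-1) * (a-b) := by push_cast [Nat.add_sub_cancel]; ring

lemma annulus_vol_le (d : ℕ) (hd : 0 < d) {r δ : ℝ} (hr : 0 < r) (hδ : 0 < δ) (x : Euc d) :
    volume (ball x r \ ball x (r - δ)) ≤
      ENNReal.ofReal ((d:ℝ) * r^(d-1) * δ) * volume (ball (0 : Euc d) 1) := by
  haveI : Nontrivial (Euc d) := Module.nontrivial_of_finrank_pos (R := ℝ)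
    (by rw [finrank_euclideanSpace_fin]; exact hd)
  have hfr : Module.finrank ℝ (Euc d) = d := finrank_euclideanSpace_fin
  have hballr : volume (ball x r) = ENNReal.ofReal (r^d) * volume (ball (0 : Euc d) 1) := by
    rw [MeasureTheory.Measure.addHaar_ball volume x hr.le, hfr]
  have hpow : r^(d-1) * r = r^d := by rw [← pow_succ, Nat.sub_add_cancel hd]
  have hrd1 : (0:ℝ) ≤ r^(d-1) := pow_nonneg hr.le _
  by_cases hcase : r ≤ δ
  · calc volume (ball x r \ ball x (r - δ)) ≤ volume (ball x r) :=
          measure_mono Set.diff_subset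
      _ = ENNReal.ofReal (r^d) * volume (ball (0 : Euc d) 1) := hballr
      _ ≤ ENNReal.ofReal ((d:ℝ) * r^(d-1) * δ) * volume (ball (0 : Euc d) 1) := by
          apply mul_le_mul_left
          apply ENNReal.ofReal_le_ofReal
          have h1 : (1:ℝ) ≤ (d:ℝ) := by exact_mod_cast hd
          have h2 : r^(d-1) * r ≤ r^(d-1) * δ := mul_le_mul_of_nonneg_left hcase hrd1
          have h3 : 1 * (r^(d-1) * δ) ≤ (d:ℝ) * (r^(d-1) * δ) :=
            mul_le_mul_of_nonneg_right h1 (mul_nonneg hrd1 hδ.le)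
          nlinarith [hpow]
  · push_neg at hcase
    have hs : 0 < r - δ := by linarith
    have hsub : ball x (r - δ) ⊆ ball x r := ball_subset_ball (by linarith)
    have hdiff : volume (ball x r \ ball x (r - δ)) =
        volume (ball x r) - volume (ball x (r - δ)) :=
      measure_diff hsub measurableSet_ball.nullMeasurableSet measure_ball_lt_top.ne
    have hballs : volume (ball x (r - δ)) =
        ENNReal.ofReal ((r - δ)^d) * volume (ball (0 : Euc d) 1) := by
      rw [MeasureTheory.Measure.addHaar_ball volume x hs.le, hfr]
    rw [hdiff, hballr, hballs,
      ← ENNReal.sub_mul (fun _ _ => measure_ball_lt_top.ne),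
      ← ENNReal.ofReal_sub _ (by positivity)]
    apply mul_le_mul_left
    apply ENNReal.ofReal_le_ofReal
    have := pow_sub_pow_le_aux hs.le (by linarith : r - δ ≤ r) d
    calc r^d - (r-δ)^d ≤ (d:ℝ) * r^(d-1) * (r - (r-δ)) := this
      _ = (d:ℝ) * r^(d-1) * δ := by ring

lemma lintegral_sq_le {α : Type*} [MeasurableSpace α] (μ : Measure α) {f : α → ℝ≥0∞}
    (hf : AEMeasurable f μ) :
    (∫⁻ y, f y ∂μ)^2 ≤ μ Set.univ * ∫⁻ y, f y ^ 2 ∂μ := by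
  have hpq : Real.HolderConjugate 2 2 := Real.HolderConjugate.two_two
  have H := ENNReal.lintegral_mul_le_Lp_mul_Lq μ hpq hf
    (aemeasurable_const (b := (1:ℝ≥0∞)))
  simp only [Pi.mul_apply, mul_one, ENNReal.one_rpow, lintegral_one] at H
  have hr : ∀ u : ℝ≥0∞, (u ^ ((1:ℝ)/2)) * (u ^ ((1:ℝ)/2)) = u := by
    intro u
    rw [← ENNReal.rpow_add_of_nonneg _ _ (by norm_num) (by norm_num)]
    norm_num
  have hsq : ∀ y, f y ^ ((2:ℝ)) = f y ^ (2:ℕ) := by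
    intro y
    rw [← ENNReal.rpow_natCast]; norm_num
  calc (∫⁻ y, f y ∂μ)^2
      ≤ ((∫⁻ y, f y ^ (2:ℝ) ∂μ) ^ ((1:ℝ)/2) * (μ Set.univ) ^ ((1:ℝ)/2))^2 := by
        rw [pow_two, pow_two]; exact mul_le_mul' H H
    _ = (∫⁻ y, f y ^ (2:ℝ) ∂μ) * μ Set.univ := by
        rw [pow_two]
        rw [show ∀ a b : ℝ≥0∞, (a*b)*(a*b) = (a*a)*(b*b) from fun a b => by ring]
        rw [hr, hr]
    _ = μ Set.univ * ∫⁻ y, f y ^ 2 ∂μ := by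
        rw [mul_comm]
        congr 1
        exact lintegral_congr fun y => hsq y


lemma core (d : ℕ) (hd : 0 < d) (k n : ℤ) (hkn : k < n) (g : Euc d → ℝ)
    (hgm : Measurable g) (hg : MemLp g 2 volume)
    (hc : ∀ m : Fin d → ℤ, ∫ y in dyadicCube d (n - 1) m, g y = 0) :
    ∫ x, (Mk d k g x) ^ 2 ≤ (4 * (d:ℝ)^3) * 2 ^ (k - n) * ∫ x, (g x) ^ 2 := by
  have hRHSfac : (0:ℝ) ≤ 4 * (d:ℝ)^3 * 2 ^ (k-n) := by positivity
  have hg2int : Integrable (fun x => (g x)^2) volume := hg.integrable_sq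
  have hg2nonneg : (0:ℝ) ≤ ∫ x, (g x)^2 := integral_nonneg fun x => sq_nonneg _
  by_cases hmeas : AEStronglyMeasurable (fun x => (Mk d k g x)^2) volume
  swap
  · rw [integral_non_aestronglyMeasurable hmeas]
    exact mul_nonneg hRHSfac hg2nonneg
  -- setup
  set r : ℝ := (2:ℝ)^(-k) with hr_def
  have hr : 0 < r := by positivity
  set δ : ℝ := Real.sqrt d * 2^(-(n-1)) with hδ_def
  have hδ : 0 < δ := by
    apply mul_pos (Real.sqrt_pos.2 (by exact_mod_cast hd)) (by positivity)
  set A : Euc d → Set (Euc d) := fun x => ball x r \ ball x (r - δ) with hA_def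
  have hAmeas : ∀ x, MeasurableSet (A x) := fun x =>
    measurableSet_ball.diff measurableSet_ball
  set c : ENNReal := volume (ball (0:Euc d) 1) with hc_def
  have hc0 : c ≠ 0 := (measure_ball_pos volume 0 one_pos).ne'
  have hctop : c ≠ ⊤ := measure_ball_lt_top.ne
  set V : ENNReal := volume (ball (0:Euc d) r) with hV_def
  have hV0 : V ≠ 0 := (measure_ball_pos volume 0 hr).ne'
  have hVtop : V ≠ ⊤ := measure_ball_lt_top.ne
  haveI : Nontrivial (Euc d) := Module.nontrivial_of_finrank_pos (R := ℝ)
    (by rw [finrank_euclideanSpace_fin]; exact hd)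
  have hVval : V = ENNReal.ofReal (r^d) * c := by
    rw [hV_def, MeasureTheory.Measure.addHaar_ball volume _ hr.le,
      finrank_euclideanSpace_fin]
  set f : Euc d → ENNReal := fun y => ENNReal.ofReal |g y| with hf_def
  have hfmeas : Measurable f := (hgm.abs).ennreal_ofReal
  set αbd : ENNReal := ENNReal.ofReal ((d:ℝ) * r^(d-1) * δ) * c with hαbd_def
  have hαtop : αbd ≠ ⊤ := ENNReal.mul_ne_top ENNReal.ofReal_ne_top hctop
  have hαbd : ∀ x, volume (A x) ≤ αbd := fun x => annulus_vol_le d hd hr hδ x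
  -- integrability on balls
  have hgball : ∀ x, IntegrableOn g (ball x r) volume := by
    intro x
    have h1 := hg.restrict (ball x r)
    haveI : IsFiniteMeasure (volume.restrict (ball x r)) :=
      ⟨by rw [Measure.restrict_apply_univ]; exact measure_ball_lt_top⟩
    exact h1.integrable one_le_two
  have hgA : ∀ x, IntegrableOn (fun y => |g y|) (A x) volume := fun x =>
    ((hgball x).mono_set Set.diff_subset).abs
  -- pointwise real estimate
  have hMk : ∀ x, Mk d k g x = V.toReal⁻¹ * ∫ y in ball x r, g y := fun x => rfl
  have hpt : ∀ x, |Mk d k g x| ≤ V.toReal⁻¹ * ∫ y in A x, |g y| := by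
    intro x
    rw [hMk x, abs_mul, abs_inv, abs_of_nonneg ENNReal.toReal_nonneg]
    exact mul_le_mul_of_nonneg_left
      (step1 d (n-1) (le_refl δ) g x (hgball x) hc) (by positivity)
  -- pointwise ENNReal estimate
  have hofV : ENNReal.ofReal (V.toReal⁻¹) = V⁻¹ := by
    rw [ENNReal.ofReal_inv_of_pos (ENNReal.toReal_pos hV0 hVtop),
      ENNReal.ofReal_toReal hVtop]
  have hintA : ∀ x, ENNReal.ofReal (∫ y in A x, |g y|) = ∫⁻ y in A x, f y := by
    intro x
    rw [ofReal_integral_eq_lintegral_ofReal (hgA x)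
      (Filter.Eventually.of_forall fun y => abs_nonneg _)]
  have hpt2 : ∀ x, ENNReal.ofReal ((Mk d k g x)^2) ≤
      V⁻¹^2 * (volume (A x) * ∫⁻ y in A x, f y ^ 2) := by
    intro x
    have e1 : ENNReal.ofReal ((Mk d k g x)^2) = (ENNReal.ofReal |Mk d k g x|)^2 := by
      rw [← ENNReal.ofReal_pow (abs_nonneg _), sq_abs]
    rw [e1]
    have e2 : (ENNReal.ofReal |Mk d k g x|)^2 ≤
        (ENNReal.ofReal (V.toReal⁻¹ * ∫ y in A x, |g y|))^2 :=
      pow_le_pow_left' (ENNReal.ofReal_le_ofReal (hpt x)) 2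
    refine e2.trans ?_
    rw [ENNReal.ofReal_mul (by positivity), hofV, hintA, mul_pow]
    apply mul_le_mul_right
    have := lintegral_sq_le (volume.restrict (A x)) (f := f) hfmeas.aemeasurable
    rwa [Measure.restrict_apply_univ] at this
  -- the product-set S and Fubini
  set S : Set (Euc d × Euc d) :=
    {p | dist p.2 p.1 < r ∧ ¬ (dist p.2 p.1 < r - δ)} with hS_def
  have hSmeas : MeasurableSet S := by
    have hcont : Continuous (fun p : Euc d × Euc d => dist p.2 p.1) :=
      continuous_dist.comp (continuous_snd.prodMk continuous_fst)
    exact ((hcont.measurable measurableSet_Iio).inter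
      (hcont.measurable measurableSet_Iio).compl)
  have hind : ∀ x y, (A x).indicator (fun y => f y ^ 2) y =
      S.indicator (fun p => f p.2 ^ 2) (x, y) := by
    intro x y
    have : y ∈ A x ↔ (x, y) ∈ S := by
      simp [hA_def, hS_def, mem_ball]
    by_cases hy : y ∈ A x
    · rw [Set.indicator_of_mem hy, Set.indicator_of_mem (this.1 hy)]
    · rw [Set.indicator_of_notMem hy, Set.indicator_of_notMem (fun hm => hy (this.2 hm))]
  have hsec : ∀ y x, S.indicator (fun p => f p.2 ^ 2) (x, y) =
      (A y).indicator (fun _ => f y ^ 2) x := by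
    intro y x
    have : (x, y) ∈ S ↔ x ∈ A y := by
      simp [hA_def, hS_def, mem_ball, dist_comm]
    by_cases hx : (x, y) ∈ S
    · rw [Set.indicator_of_mem hx, Set.indicator_of_mem (this.1 hx)]
    · rw [Set.indicator_of_notMem hx, Set.indicator_of_notMem (fun hm => hx (this.2 hm))]
  have hGmeas : Measurable (fun p : Euc d × Euc d => S.indicator (fun q => f q.2 ^ 2) p) :=
    Measurable.indicator ((hfmeas.comp measurable_snd).pow_const 2) hSmeas
  have hKtop : V⁻¹^2 * αbd ≠ ⊤ :=
    ENNReal.mul_ne_top (ENNReal.pow_ne_top (ENNReal.inv_ne_top.2 hV0)) hαtop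
  have KEY : ∫⁻ x, ENNReal.ofReal ((Mk d k g x)^2) ≤
      (V⁻¹ * αbd)^2 * ∫⁻ y, f y ^ 2 := by
    calc ∫⁻ x, ENNReal.ofReal ((Mk d k g x)^2)
        ≤ ∫⁻ x, V⁻¹^2 * (volume (A x) * ∫⁻ y in A x, f y ^ 2) := lintegral_mono hpt2
      _ ≤ ∫⁻ x, (V⁻¹^2 * αbd) * ∫⁻ y in A x, f y ^ 2 := by
          apply lintegral_mono
          intro x
          calc V⁻¹^2 * (volume (A x) * ∫⁻ y in A x, f y ^ 2)
              ≤ V⁻¹^2 * (αbd * ∫⁻ y in A x, f y ^ 2) :=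
                mul_le_mul_right (mul_le_mul_left (hαbd x) _) _
            _ = (V⁻¹^2 * αbd) * ∫⁻ y in A x, f y ^ 2 := (mul_assoc _ _ _).symm
      _ = (V⁻¹^2 * αbd) * ∫⁻ x, ∫⁻ y in A x, f y ^ 2 :=
          lintegral_const_mul' _ _ hKtop
      _ = (V⁻¹^2 * αbd) * ∫⁻ x, ∫⁻ y, S.indicator (fun p => f p.2 ^ 2) (x, y) := by
          congr 1
          apply lintegral_congr
          intro x
          rw [← lintegral_indicator (hAmeas x)]
          exact lintegral_congr fun y => hind x y
      _ = (V⁻¹^2 * αbd) * ∫⁻ y, ∫⁻ x, S.indicator (fun p => f p.2 ^ 2) (x, y) := by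
          congr 1
          exact lintegral_lintegral_swap hGmeas.aemeasurable
      _ = (V⁻¹^2 * αbd) * ∫⁻ y, f y ^ 2 * volume (A y) := by
          congr 1
          apply lintegral_congr
          intro y
          rw [show (fun x => S.indicator (fun p => f p.2 ^ 2) (x, y)) =
            (fun x => (A y).indicator (fun _ => f y ^ 2) x) from funext fun x => hsec y x]
          exact lintegral_indicator_const (hAmeas y) _
      _ ≤ (V⁻¹^2 * αbd) * ∫⁻ y, f y ^ 2 * αbd := by
          exact mul_le_mul_right (lintegral_mono fun y => mul_le_mul_right (hαbd y) _) _
      _ = (V⁻¹^2 * αbd) * ((∫⁻ y, f y ^ 2) * αbd) := by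
          rw [lintegral_mul_const' _ _ hαtop]
      _ = (V⁻¹ * αbd)^2 * ∫⁻ y, f y ^ 2 := by ring
  -- ratio bound
  have hpow : r^(d-1) * r = r^d := by rw [← pow_succ, Nat.sub_add_cancel hd]
  have hratio : V⁻¹ * αbd ≤ ENNReal.ofReal ((d:ℝ) * δ / r) := by
    have h1 : V⁻¹ * αbd =
        ENNReal.ofReal ((d:ℝ) * r^(d-1) * δ) * ((ENNReal.ofReal (r^d))⁻¹ * (c⁻¹ * c)) := by
      rw [hVval, hαbd_def, ENNReal.mul_inv (Or.inl (by simp [ENNReal.ofReal_eq_zero]; positivity))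
        (Or.inr hc0)]
      ring
    rw [h1, ENNReal.inv_mul_cancel hc0 hctop, mul_one, ← div_eq_mul_inv,
      ← ENNReal.ofReal_div_of_pos (by positivity : (0:ℝ) < r^d)]
    apply ENNReal.ofReal_le_ofReal
    apply le_of_eq
    field_simp
    linear_combination hpow
  -- numeric bound
  have hnum : ((d:ℝ) * δ / r)^2 ≤ 4 * (d:ℝ)^3 * 2^(k-n) := by
    have hδr : δ / r = Real.sqrt d * 2^(k - n + 1) := by
      rw [hδ_def, hr_def, mul_div_assoc, ← zpow_sub₀ (two_ne_zero : (2:ℝ) ≠ 0)]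
      congr 1
      ring
    have hsqrt : (Real.sqrt d)^2 = (d:ℝ) := Real.sq_sqrt (Nat.cast_nonneg d)
    have ht1 : (2:ℝ)^(k-n) ≤ 1 := zpow_le_one_of_nonpos₀ one_le_two (by omega)
    have ht0 : (0:ℝ) < 2^(k-n) := by positivity
    have h2 : (2:ℝ)^(k-n+1) = 2^(k-n) * 2 := by
      rw [zpow_add₀ (two_ne_zero : (2:ℝ) ≠ 0), zpow_one]
    have hsq : ((d:ℝ) * δ / r)^2 = (d:ℝ)^2 * ((Real.sqrt d)^2) * (2^(k-n) * 2)^2 := by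
      rw [mul_div_assoc, hδr, h2]; ring
    rw [hsq, hsqrt]
    have hd3 : (0:ℝ) ≤ (d:ℝ)^3 := by positivity
    nlinarith [mul_le_mul_of_nonneg_left ht1 (mul_nonneg hd3 ht0.le)]
  have hfinal : (V⁻¹*αbd)^2 ≤ ENNReal.ofReal (4 * (d:ℝ)^3 * 2^(k-n)) := by
    calc (V⁻¹*αbd)^2 ≤ (ENNReal.ofReal ((d:ℝ)*δ/r))^2 := pow_le_pow_left' hratio 2
      _ = ENNReal.ofReal (((d:ℝ)*δ/r)^2) := (ENNReal.ofReal_pow (by positivity) 2).symm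
      _ ≤ _ := ENNReal.ofReal_le_ofReal hnum
  have hF2 : ∫⁻ y, f y ^ 2 = ENNReal.ofReal (∫ x, (g x)^2) := by
    rw [ofReal_integral_eq_lintegral_ofReal hg2int
      (Filter.Eventually.of_forall fun x => sq_nonneg _)]
    apply lintegral_congr
    intro y
    rw [hf_def, ← ENNReal.ofReal_pow (abs_nonneg _), sq_abs]
  have hb : ∫⁻ x, ENNReal.ofReal (Mk d k g x ^ 2) ≤
      ENNReal.ofReal (4*(d:ℝ)^3 * 2^(k-n) * ∫ x, (g x)^2) := by
    refine KEY.trans ?_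
    rw [hF2]
    calc (V⁻¹*αbd)^2 * ENNReal.ofReal (∫ x, (g x)^2)
        ≤ ENNReal.ofReal (4*(d:ℝ)^3*2^(k-n)) * ENNReal.ofReal (∫ x, (g x)^2) :=
          mul_le_mul_left hfinal _
      _ = ENNReal.ofReal (4*(d:ℝ)^3 * 2^(k-n) * ∫ x, (g x)^2) :=
          (ENNReal.ofReal_mul hRHSfac).symm
  rw [integral_eq_lintegral_of_nonneg_ae
    (Filter.Eventually.of_forall fun x => sq_nonneg _) hmeas]
  calc (∫⁻ x, ENNReal.ofReal (Mk d k g x ^ 2)).toReal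
      ≤ (ENNReal.ofReal (4*(d:ℝ)^3 * 2^(k-n) * ∫ x, (g x)^2)).toReal :=
        ENNReal.toReal_mono ENNReal.ofReal_ne_top hb
    _ = 4*(d:ℝ)^3 * 2^(k-n) * ∫ x, (g x)^2 :=
        ENNReal.toReal_ofReal (mul_nonneg hRHSfac hg2nonneg)
    _ = (4 * (d:ℝ)^3) * 2 ^ (k - n) * ∫ x, (g x)^2 := by ring


/-- If `g` has vanishing integral on every dyadic cube of side `2^{-(n-1)}` and `k < n`, then
`‖M_k g‖₂² ≤ C_d 2^{k-n} ‖g‖₂²`. -/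
theorem Mk_cancellation_L2 (d : ℕ) (hd : 0 < d) :
    ∃ C : ℝ, 0 < C ∧ ∀ (k n : ℤ), k < n → ∀ g : Euc d → ℝ, MemLp g 2 volume →
      (∀ m : Fin d → ℤ, ∫ y in dyadicCube d (n - 1) m, g y = 0) →
      ∫ x, (Mk d k g x) ^ 2 ≤ C * 2 ^ (k - n) * ∫ x, (g x) ^ 2 := by
  refine ⟨4 * (d:ℝ)^3, by positivity, ?_⟩
  intro k n hkn g hg hc
  obtain ⟨g', hg'sm, hgg'⟩ := hg.1
  have hg' : MemLp g' 2 volume := hg.ae_eq hgg'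
  have hg'm : Measurable g' := hg'sm.measurable
  have hc' : ∀ m : Fin d → ℤ, ∫ y in dyadicCube d (n-1) m, g' y = 0 := by
    intro m
    rw [← hc m]
    exact integral_congr_ae (ae_restrict_of_ae (hgg'.mono fun y h => h.symm))
  have hMkeq : ∀ x, Mk d k g x = Mk d k g' x := by
    intro x
    unfold Mk
    congr 1
    exact integral_congr_ae (ae_restrict_of_ae hgg')
  have h1 : ∫ x, (Mk d k g x)^2 = ∫ x, (Mk d k g' x)^2 := by
    congr 1; funext x; rw [hMkeq]
  have h2 : ∫ x, (g x)^2 = ∫ x, (g' x)^2 :=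
    integral_congr_ae (hgg'.mono fun y h => by simp only [h])
  rw [h1, h2]
  exact core d hd k n hkn g' hg'm hg' hc'
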